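/- For every k = 0, 1, 2, …, there exists a sign arrangement θ = {θ_{i,j}}_{i,j=1}^{2^k}, θ_{i,j} = ±1 (constructed from the Walsh matrix of order 2^k), such that ‖Σ_{i,j=1}^{2^k} θ_{i,j} r_i(s) r_j(t)‖_{L^∞([0,1]²)} ≤ 2^{3k/2}. -/

import Mathlib

open MeasureTheory Real Set

/-- Rademacher function `r_k(t) = sign (sin (2^(k-1) π t))`. -/
noncomputable def rad (k : ℕ) (t : ℝ) : ℝ :=
  Real.sign (Real.sin (2 ^ (k - 1) * Real.pi * t))

/-- Lebesgue measure on the unit square `[0,1]²`. -/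
noncomputable def μsq : Measure (ℝ × ℝ) :=
  (volume.restrict (Set.Icc (0:ℝ) 1)).prod (volume.restrict (Set.Icc (0:ℝ) 1))

namespace SignChaos

/-- Hadamard/Walsh matrix entry indexed by bit vectors. -/
def E (k : ℕ) (v w : Fin k → Bool) : ℝ :=
  ∏ m, (if v m && w m then (-1:ℝ) else 1)

lemma E_pm {k : ℕ} (v w : Fin k → Bool) : E k v w = 1 ∨ E k v w = -1 := by
  refine Finset.prod_induction _ (fun x => x = 1 ∨ x = -1) ?_ (Or.inl rfl) ?_
  · rintro a b (ha | ha) (hb | hb) <;> simp [ha, hb]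
  · intro m _; split <;> simp

lemma E_symm {k : ℕ} (v w : Fin k → Bool) : E k v w = E k w v := by
  unfold E
  exact Finset.prod_congr rfl fun m _ => by rw [Bool.and_comm]

lemma orth {k : ℕ} (v v' : Fin k → Bool) :
    ∑ w : Fin k → Bool, E k v w * E k v' w = if v = v' then (2:ℝ)^k else 0 := by
  have h1 : ∀ w : Fin k → Bool, E k v w * E k v' w
      = ∏ m, ((if v m && w m then (-1:ℝ) else 1) * (if v' m && w m then (-1:ℝ) else 1)) := by
    intro w; rw [Finset.prod_mul_distrib]; rfl
  simp_rw [h1]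
  rw [← Fintype.piFinset_univ, ← Finset.prod_univ_sum (fun _ => (Finset.univ : Finset Bool))
    (fun m b => ((if v m && b then (-1:ℝ) else 1) * (if v' m && b then (-1:ℝ) else 1)))]
  have h2 : ∀ m : Fin k, (∑ b : Bool,
      (if v m && b then (-1:ℝ) else 1) * (if v' m && b then (-1:ℝ) else 1))
      = if v m = v' m then 2 else 0 := by
    intro m
    cases hv : v m <;> cases hv' : v' m <;> simp <;> norm_num
  simp_rw [h2]
  by_cases h : v = v'
  · simp [h, Finset.prod_const]
  · obtain ⟨m, hm⟩ := Function.ne_iff.mp h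
    rw [if_neg h]
    exact Finset.prod_eq_zero (Finset.mem_univ m) (by simp [hm])


variable {k : ℕ}

/-- Bit vector of a natural number. -/
def bits (k n : ℕ) : Fin k → Bool := fun m => n.testBit m

lemma bits_injOn : Set.InjOn (bits k) (Finset.range (2^k) : Finset ℕ) := by
  intro a ha b hb h
  simp only [Finset.coe_range, Set.mem_Iio] at ha hb
  refine Nat.eq_of_testBit_eq fun m => ?_
  by_cases hm : m < k
  · exact congrFun h ⟨m, hm⟩
  · rw [Nat.testBit_eq_false_of_lt (lt_of_lt_of_le ha (Nat.pow_le_pow_right (by norm_num) (le_of_not_gt hm))),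
      Nat.testBit_eq_false_of_lt (lt_of_lt_of_le hb (Nat.pow_le_pow_right (by norm_num) (le_of_not_gt hm)))]

lemma image_bits : (Finset.range (2^k)).image (bits k) = Finset.univ := by
  apply Finset.eq_univ_of_card
  rw [Finset.card_image_of_injOn bits_injOn, Finset.card_range]
  simp [Fintype.card_fun]

/-- Hadamard matrix entry indexed by naturals. -/
noncomputable def M (k : ℕ) (a b : ℕ) : ℝ := E k (bits k a) (bits k b)

lemma M_pm (a b : ℕ) : M k a b = 1 ∨ M k a b = -1 := E_pm _ _

lemma Morth {a a' : ℕ} (ha : a ∈ Finset.range (2^k)) (ha' : a' ∈ Finset.range (2^k)) :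
    ∑ b ∈ Finset.range (2^k), M k a b * M k a' b = if a = a' then (2:ℝ)^k else 0 := by
  have : ∑ b ∈ Finset.range (2^k), M k a b * M k a' b
      = ∑ w ∈ (Finset.range (2^k)).image (bits k), E k (bits k a) w * E k (bits k a') w := by
    rw [Finset.sum_image (fun x hx y hy h => bits_injOn hx hy h)]
    rfl
  rw [this, image_bits, orth]
  by_cases h : a = a'
  · simp [h]
  · rw [if_neg h, if_neg (fun hc => h (bits_injOn ha ha' hc))]

lemma quad (δ : ℕ → ℝ) (hδ : ∀ b, |δ b| ≤ 1) :
    ∑ a ∈ Finset.range (2^k), (∑ b ∈ Finset.range (2^k), M k a b * δ b)^2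
      ≤ (2:ℝ)^k * (2:ℝ)^k := by
  have key : ∑ a ∈ Finset.range (2^k), (∑ b ∈ Finset.range (2^k), M k a b * δ b)^2
      = ∑ b ∈ Finset.range (2^k), ∑ b' ∈ Finset.range (2^k),
          (δ b * δ b') * ∑ a ∈ Finset.range (2^k), M k b a * M k b' a := by
    simp_rw [sq, Finset.sum_mul_sum, Finset.mul_sum]
    rw [Finset.sum_comm]
    refine Finset.sum_congr rfl fun b hb => ?_
    rw [Finset.sum_comm]
    refine Finset.sum_congr rfl fun b' hb' => ?_
    refine Finset.sum_congr rfl fun a ha => ?_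
    have h1 : M k a b = M k b a := E_symm _ _
    have h2 : M k a b' = M k b' a := E_symm _ _
    rw [h1, h2]; ring
  rw [key]
  have : ∀ b ∈ Finset.range (2^k), ∑ b' ∈ Finset.range (2^k),
      (δ b * δ b') * ∑ a ∈ Finset.range (2^k), M k b a * M k b' a = δ b ^ 2 * (2:ℝ)^k := by
    intro b hb
    rw [Finset.sum_eq_single b]
    · rw [Morth hb hb, if_pos rfl]; ring
    · intro b' hb' hne
      rw [Morth hb hb', if_neg (fun h => hne h.symm), mul_zero]
    · intro h; exact absurd hb h
  rw [Finset.sum_congr rfl this]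
  calc ∑ b ∈ Finset.range (2^k), δ b ^ 2 * (2:ℝ)^k
      ≤ ∑ b ∈ Finset.range (2^k), 1 * (2:ℝ)^k := by
        refine Finset.sum_le_sum fun b hb => ?_
        have h1 : δ b ^ 2 ≤ 1 := by
          rw [← sq_abs]; nlinarith [hδ b, abs_nonneg (δ b)]
        exact mul_le_mul_of_nonneg_right h1 (by positivity)
    _ = (2:ℝ)^k * (2:ℝ)^k := by
        rw [Finset.sum_const, Finset.card_range]; push_cast; ring

lemma main_bound (ε δ : ℕ → ℝ) (hε : ∀ a, |ε a| ≤ 1) (hδ : ∀ b, |δ b| ≤ 1) :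
    |∑ a ∈ Finset.range (2^k), ∑ b ∈ Finset.range (2^k), M k a b * ε a * δ b|
      ≤ (2:ℝ)^k * Real.sqrt ((2:ℝ)^k) := by
  set g : ℕ → ℝ := fun a => ∑ b ∈ Finset.range (2^k), M k a b * δ b with hg
  have hS : ∑ a ∈ Finset.range (2^k), ∑ b ∈ Finset.range (2^k), M k a b * ε a * δ b
      = ∑ a ∈ Finset.range (2^k), ε a * g a := by
    refine Finset.sum_congr rfl fun a ha => ?_
    rw [hg, Finset.mul_sum]
    refine Finset.sum_congr rfl fun b hb => by ring
  rw [hS]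
  have h1 : |∑ a ∈ Finset.range (2^k), ε a * g a| ≤ ∑ a ∈ Finset.range (2^k), |g a| := by
    refine (Finset.abs_sum_le_sum_abs _ _).trans (Finset.sum_le_sum fun a ha => ?_)
    rw [abs_mul]
    calc |ε a| * |g a| ≤ 1 * |g a| := by
          exact mul_le_mul_of_nonneg_right (hε a) (abs_nonneg _)
      _ = |g a| := one_mul _
  have h2 : (∑ a ∈ Finset.range (2^k), |g a|)^2 ≤ (2:ℝ)^k * ((2:ℝ)^k * (2:ℝ)^k) := by
    have := Finset.sum_mul_sq_le_sq_mul_sq (Finset.range (2^k)) (fun _ => (1:ℝ)) (fun a => |g a|)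
    simp only [one_mul, one_pow, Finset.sum_const, Finset.card_range, nsmul_eq_mul, mul_one] at this
    calc (∑ a ∈ Finset.range (2^k), |g a|)^2
        ≤ (2^k : ℕ) * ∑ a ∈ Finset.range (2^k), |g a|^2 := this
      _ = (2:ℝ)^k * ∑ a ∈ Finset.range (2^k), g a^2 := by
          push_cast; simp [sq_abs]
      _ ≤ (2:ℝ)^k * ((2:ℝ)^k * (2:ℝ)^k) := by
          refine mul_le_mul_of_nonneg_left ?_ (by positivity)
          exact quad δ hδ
  have hnn : (0:ℝ) ≤ ∑ a ∈ Finset.range (2^k), |g a| :=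
    Finset.sum_nonneg fun a _ => abs_nonneg _
  have h3 : ∑ a ∈ Finset.range (2^k), |g a| ≤ (2:ℝ)^k * Real.sqrt ((2:ℝ)^k) := by
    have hc : ((2:ℝ)^k * Real.sqrt ((2:ℝ)^k))^2 = (2:ℝ)^k * ((2:ℝ)^k * (2:ℝ)^k) := by
      rw [mul_pow, Real.sq_sqrt (by positivity)]; ring
    have hCnn : (0:ℝ) ≤ (2:ℝ)^k * Real.sqrt ((2:ℝ)^k) := by positivity
    have h4 : (∑ a ∈ Finset.range (2^k), |g a|)^2 ≤ ((2:ℝ)^k * Real.sqrt ((2:ℝ)^k))^2 := by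
      rw [hc]; exact h2
    exact (pow_le_pow_iff_left₀ hnn hCnn two_ne_zero).mp h4
  exact h1.trans h3

end SignChaos

lemma abs_rad_le_one (i : ℕ) (s : ℝ) : |rad i s| ≤ 1 := by
  unfold rad Real.sign
  split_ifs <;> norm_num


/-- For every `k` there is a sign arrangement `θ = {θ_{i,j}}_{i,j=1}^{2^k}` with
`‖Σ_{i,j=1}^{2^k} θ_{i,j} r_i(s) r_j(t)‖_{L^∞([0,1]²)} ≤ 2^{3k/2}`. -/
theorem exists_sign_chaos_small_sup_norm (k : ℕ) :
    ∃ θ : ℕ → ℕ → ℝ, (∀ i j, θ i j = 1 ∨ θ i j = -1) ∧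
      eLpNorm (fun p : ℝ × ℝ =>
          ∑ i ∈ Finset.Icc 1 (2 ^ k), ∑ j ∈ Finset.Icc 1 (2 ^ k),
            θ i j * rad i p.1 * rad j p.2) ⊤ μsq
        ≤ ENNReal.ofReal ((2:ℝ) ^ ((3 * (k:ℝ)) / 2)) := by
  refine ⟨fun i j => SignChaos.M k (i-1) (j-1), fun i j => SignChaos.M_pm _ _, ?_⟩
  have hC : (2:ℝ)^k * Real.sqrt ((2:ℝ)^k) = (2:ℝ) ^ ((3 * (k:ℝ)) / 2) := by
    rw [← Real.rpow_natCast 2 k, Real.sqrt_eq_rpow, ← Real.rpow_mul (by norm_num),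
      ← Real.rpow_add (by norm_num)]
    congr 1
    ring
  have hpt : ∀ p : ℝ × ℝ,
      ‖∑ i ∈ Finset.Icc 1 (2 ^ k), ∑ j ∈ Finset.Icc 1 (2 ^ k),
          SignChaos.M k (i-1) (j-1) * rad i p.1 * rad j p.2‖ ≤ (2:ℝ) ^ ((3 * (k:ℝ)) / 2) := by
    intro p
    rw [Real.norm_eq_abs, ← hC]
    have hre : ∑ i ∈ Finset.Icc 1 (2 ^ k), ∑ j ∈ Finset.Icc 1 (2 ^ k),
          SignChaos.M k (i-1) (j-1) * rad i p.1 * rad j p.2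
        = ∑ a ∈ Finset.range (2^k), ∑ b ∈ Finset.range (2^k),
            SignChaos.M k a b * rad (1+a) p.1 * rad (1+b) p.2 := by
      rw [← Finset.Ico_add_one_right_eq_Icc, Finset.sum_Ico_eq_sum_range]
      refine Finset.sum_congr (by simp) fun a ha => ?_
      rw [Finset.sum_Ico_eq_sum_range]
      refine Finset.sum_congr (by simp) fun b hb => ?_
      simp [Nat.add_sub_cancel_left]
    rw [hre]
    exact SignChaos.main_bound (fun a => rad (1+a) p.1) (fun b => rad (1+b) p.2)
      (fun a => abs_rad_le_one _ _) (fun b => abs_rad_le_one _ _)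
  calc eLpNorm _ ⊤ μsq = eLpNormEssSup _ μsq := eLpNorm_exponent_top
    _ ≤ ENNReal.ofReal ((2:ℝ) ^ ((3 * (k:ℝ)) / 2)) :=
        eLpNormEssSup_le_of_ae_bound (Filter.Eventually.of_forall hpt)
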